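/- Let d ≥ 1, n ≥ 1, let G be a symmetric positive definite d×d real matrix with G ⪰ I (Loewner order), and let x_1, …, x_n ∈ ℝ^d satisfy ‖x_j‖₂ ≤ 1 for all j. Define W_0 := G and W_j := W_{j−1} + x_j x_j^⊤ for 1 ≤ j ≤ n. Then Σ_{j=1}^n √( x_j^⊤ W_{j−1}^{−1} x_j ) ≤ √( 2 n log( det(W_n) / det(G) ) ). -/

import Mathlib

open Matrix

/-- The Euclidean norm of a vector in `ℝ^d`. -/
noncomputable def euclNorm {d : ℕ} (v : Fin d → ℝ) : ℝ :=
  Real.sqrt (v ⬝ᵥ v)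

/-- The design (Gram) matrix after `j` rounds with base matrix `G0`:
`G0 + Σ_{i<j} x_i x_iᵀ` (0-indexed, so this is `W_j` with `W_0 = G0`). -/
noncomputable def gram {d : ℕ} (G0 : Matrix (Fin d) (Fin d) ℝ) (x : ℕ → Fin d → ℝ) (j : ℕ) :
    Matrix (Fin d) (Fin d) ℝ :=
  G0 + ∑ i ∈ Finset.range j, vecMulVec (x i) (x i)

lemma aux_vecMulVec_psd {d : ℕ} (v : Fin d → ℝ) : (vecMulVec v v).PosSemidef := by
  refine Matrix.PosSemidef.of_dotProduct_mulVec_nonneg ?_ ?_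
  · unfold Matrix.IsHermitian
    ext i j
    simp [vecMulVec_apply, mul_comm]
  · intro y
    have h1 : vecMulVec v v *ᵥ y = (v ⬝ᵥ y) • v := by
      ext i; simp only [vecMulVec_apply, mulVec, dotProduct, Pi.smul_apply, smul_eq_mul,
        Finset.sum_mul, Finset.mul_sum]
      exact Finset.sum_congr rfl fun k _ => by ring
    rw [h1, star_trivial, dotProduct_smul, smul_eq_mul, dotProduct_comm]
    exact mul_self_nonneg _

lemma aux_sum_psd {d : ℕ} (x : ℕ → Fin d → ℝ) (j : ℕ) :
    (∑ i ∈ Finset.range j, vecMulVec (x i) (x i)).PosSemidef := by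
  induction j with
  | zero => simpa using (Matrix.PosSemidef.zero (n := Fin d) (R := ℝ))
  | succ k ih =>
    rw [Finset.sum_range_succ]
    exact ih.add (aux_vecMulVec_psd _)

lemma aux_log {s : ℝ} (h0 : 0 ≤ s) (h1 : s ≤ 1) : s ≤ 2 * Real.log (1 + s) := by
  have hpos : (0:ℝ) < 1 + s := by linarith
  have h2 : Real.log (1 + s)⁻¹ ≤ (1 + s)⁻¹ - 1 :=
    Real.log_le_sub_one_of_pos (by positivity)
  rw [Real.log_inv] at h2
  have h4 : (1 + s)⁻¹ ≤ 1 - s / 2 := by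
    rw [inv_eq_one_div, div_le_iff₀ hpos]
    nlinarith
  linarith

/-- Key single-step facts: nonnegativity, `s ≤ 1`, and the determinant identity. -/
lemma aux_key {d : ℕ} {W : Matrix (Fin d) (Fin d) ℝ} (hW : W.PosDef)
    (hW1 : (W - 1).PosSemidef) {v : Fin d → ℝ} (hv : v ⬝ᵥ v ≤ 1) :
    0 ≤ v ⬝ᵥ W⁻¹ *ᵥ v ∧ v ⬝ᵥ W⁻¹ *ᵥ v ≤ 1 ∧
      (W + vecMulVec v v).det = W.det * (1 + v ⬝ᵥ W⁻¹ *ᵥ v) := by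
  have hdetW : (0:ℝ) < W.det := hW.det_pos
  have hunit : IsUnit W.det := hdetW.ne'.isUnit
  set s : ℝ := v ⬝ᵥ W⁻¹ *ᵥ v with hs
  have hs0 : 0 ≤ s := by
    have := hW.inv.posSemidef.dotProduct_mulVec_nonneg v
    rwa [star_trivial] at this
  set y : Fin d → ℝ := W⁻¹ *ᵥ v with hy
  have hWy : W *ᵥ y = v := by
    rw [hy, mulVec_mulVec, Matrix.mul_nonsing_inv _ hunit, one_mulVec]
  have hyy : y ⬝ᵥ y ≤ y ⬝ᵥ v := by
    have := hW1.dotProduct_mulVec_nonneg y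
    rw [star_trivial, sub_mulVec, one_mulVec, dotProduct_sub, hWy] at this
    linarith
  have hyynn : 0 ≤ y ⬝ᵥ y := Finset.sum_nonneg fun i _ => mul_self_nonneg _
  have hvvnn : 0 ≤ v ⬝ᵥ v := Finset.sum_nonneg fun i _ => mul_self_nonneg _
  have hcs : (v ⬝ᵥ y) ^ 2 ≤ (v ⬝ᵥ v) * (y ⬝ᵥ y) := by
    have := Finset.sum_mul_sq_le_sq_mul_sq Finset.univ v y
    simpa [dotProduct, sq, Finset.mul_sum, mul_pow] using this
  have hsy : s = v ⬝ᵥ y := rfl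
  have hs1 : s ≤ 1 := by
    have hss : s ^ 2 ≤ s := by
      calc s ^ 2 = (v ⬝ᵥ y) ^ 2 := by rw [hsy]
        _ ≤ (v ⬝ᵥ v) * (y ⬝ᵥ y) := hcs
        _ ≤ 1 * (y ⬝ᵥ v) := mul_le_mul hv hyy hyynn zero_le_one
        _ = s := by rw [one_mul, dotProduct_comm, hsy]
    nlinarith
  refine ⟨hs0, hs1, ?_⟩
  have hfact : W + vecMulVec v v = W * (1 + replicateCol (Fin 1) y * replicateRow (Fin 1) v) := by
    rw [Matrix.mul_add, mul_one, ← Matrix.mul_assoc, ← replicateCol_mulVec, hWy, vecMulVec_eq (Fin 1)]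
    rfl
  rw [hfact, det_mul]
  have hd := det_one_add_replicateCol_mul_replicateRow (ι := Fin 1) y v
  erw [hd, hsy]

/-- Pooled elliptical potential with base matrix `G ⪰ I`:
`Σ_{j=1}^n √(x_jᵀ W_{j-1}⁻¹ x_j) ≤ √( 2 n log( det W_n / det G ) )`. -/
theorem stmt_6 {d n : ℕ} (hd : 1 ≤ d) (hn : 1 ≤ n)
    (G : Matrix (Fin d) (Fin d) ℝ) (hG : G.PosDef) (hGI : (G - 1).PosSemidef)
    (x : ℕ → Fin d → ℝ) (hx : ∀ j < n, euclNorm (x j) ≤ 1) :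
    (∑ j ∈ Finset.range n, Real.sqrt (x j ⬝ᵥ (gram G x j)⁻¹.mulVec (x j))) ≤
      Real.sqrt (2 * n * Real.log ((gram G x n).det / G.det)) := by
  have hWpd : ∀ j, (gram G x j).PosDef := fun j => hG.add_posSemidef (aux_sum_psd x j)
  have hW1 : ∀ j, (gram G x j - 1).PosSemidef := by
    intro j
    have : gram G x j - 1 = (G - 1) + ∑ i ∈ Finset.range j, vecMulVec (x i) (x i) := by
      unfold _root_.gram; abel
    rw [this]
    exact hGI.add (aux_sum_psd x j)
  set s : ℕ → ℝ := fun j => x j ⬝ᵥ (gram G x j)⁻¹ *ᵥ x j with hsdef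
  have hxv : ∀ j < n, x j ⬝ᵥ x j ≤ 1 := by
    intro j hj
    have h1 := hx j hj
    have h2 : 0 ≤ x j ⬝ᵥ x j := Finset.sum_nonneg fun i _ => mul_self_nonneg _
    have h3 := Real.sq_sqrt h2
    unfold euclNorm at h1
    nlinarith [Real.sqrt_nonneg (x j ⬝ᵥ x j)]
  have hkey : ∀ j < n, 0 ≤ s j ∧
      s j ≤ 2 * (Real.log (gram G x (j+1)).det - Real.log (gram G x j).det) := by
    intro j hj
    obtain ⟨h0, h1, hdet⟩ := aux_key (hWpd j) (hW1 j) (hxv j hj)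
    refine ⟨h0, ?_⟩
    have hWsucc : gram G x (j+1) = gram G x j + vecMulVec (x j) (x j) := by
      unfold _root_.gram; rw [Finset.sum_range_succ, add_assoc]
    have hpos1 : (0:ℝ) < 1 + s j := by linarith
    have hlog : Real.log (gram G x (j+1)).det =
        Real.log (gram G x j).det + Real.log (1 + s j) := by
      rw [hWsucc, hdet, Real.log_mul (hWpd j).det_pos.ne' hpos1.ne']
    rw [hlog]
    have := aux_log h0 h1
    linarith
  have hs0 : ∀ j ∈ Finset.range n, 0 ≤ s j := fun j hj =>
    (hkey j (Finset.mem_range.mp hj)).1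
  have hW0 : gram G x 0 = G := by unfold _root_.gram; simp
  have hsum : ∑ j ∈ Finset.range n, s j ≤ 2 * Real.log ((gram G x n).det / G.det) := by
    calc ∑ j ∈ Finset.range n, s j
        ≤ ∑ j ∈ Finset.range n,
            2 * (Real.log (gram G x (j+1)).det - Real.log (gram G x j).det) :=
          Finset.sum_le_sum fun j hj => (hkey j (Finset.mem_range.mp hj)).2
      _ = 2 * (Real.log (gram G x n).det - Real.log (gram G x 0).det) := by
          rw [← Finset.mul_sum, Finset.sum_range_sub (fun j => Real.log (gram G x j).det)]
      _ = 2 * Real.log ((gram G x n).det / G.det) := by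
          rw [hW0, Real.log_div (hWpd n).det_pos.ne' hG.det_pos.ne']
  have hcs : (∑ j ∈ Finset.range n, Real.sqrt (s j)) ^ 2 ≤
      (∑ _j ∈ Finset.range n, (1:ℝ)) * ∑ j ∈ Finset.range n, s j :=
    Finset.sum_sq_le_sum_mul_sum_of_sq_eq_mul _ (fun i _ => zero_le_one) hs0
      (fun i hi => by rw [Real.sq_sqrt (hs0 i hi), one_mul])
  rw [Finset.sum_const, Finset.card_range, nsmul_eq_mul, mul_one] at hcs
  apply Real.le_sqrt_of_sq_le
  calc (∑ j ∈ Finset.range n, Real.sqrt (s j)) ^ 2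
      ≤ (n : ℝ) * ∑ j ∈ Finset.range n, s j := hcs
    _ ≤ (n : ℝ) * (2 * Real.log ((gram G x n).det / G.det)) := by
        apply mul_le_mul_of_nonneg_left hsum (Nat.cast_nonneg n)
    _ = 2 * n * Real.log ((gram G x n).det / G.det) := by ring
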